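/- Let r be a formal variable and let w = w(u) = 1 + u − ((r−1)/6)u² + ⋯ be the unique power series solution in 1 + u + u²ℚ[r][[u]] of w^{r+1}/(r(r+1)) − w/r + 1/(r+1) = u²/2. Define C_n(r,j) by (w^{j+1} − 1)/(j+1) = Σ_{n≥0} C_n(r,j) u^{n+1} (with left-hand side replaced by log w when j = −1), and set f_j(T) = Σ_{k≥0} (2k+1)!! C_{2k}(r,j)(−T)^k. Then f_{j+1}(T) = (1 + ((r−1)/2 − j)T + (r+1)T² d/dT) f_j(T). -/

import Mathlib

noncomputable section

/-- The field `ℚ(r,j)` of rational functions in the two formal variables `r`, `j`. -/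
abbrev KK : Type := FractionRing (MvPolynomial (Fin 2) ℚ)

/-- The formal variable `r` as an element of `ℚ(r,j)`. -/
def Rv : KK := algebraMap (MvPolynomial (Fin 2) ℚ) KK (MvPolynomial.X 0)

/-- The formal variable `j` as an element of `ℚ(r,j)`. -/
def Jv : KK := algebraMap (MvPolynomial (Fin 2) ℚ) KK (MvPolynomial.X 1)

/-- Generalized binomial coefficient `binom(a,k) = a(a-1)⋯(a-k+1)/k!`. -/
def gbinom (a : KK) (k : ℕ) : KK :=
  (∏ i ∈ Finset.range k, (a - (i : KK))) / (k.factorial : KK)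

/-- The binomial-series power `(1+v)^a = Σ_k binom(a,k) v^k`, well defined as a power
series when `v` has zero constant term. -/
def bpow (a : KK) (v : PowerSeries KK) : PowerSeries KK :=
  PowerSeries.mk fun n =>
    ∑ k ∈ Finset.range (n + 1), gbinom a k * PowerSeries.coeff (R := KK) n (v ^ k)

/-- `isW ρ w` says that `w = w(u) ∈ 1 + u + u²·[[u]]` solves
`w^{ρ+1}/(ρ(ρ+1)) - w/ρ + 1/(ρ+1) = u²/2`, where `w^{ρ+1}` is the binomial series
`(1 + (w-1))^{ρ+1}`. -/
def isW (ρ : KK) (w : PowerSeries KK) : Prop :=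
  PowerSeries.coeff (R := KK) 0 w = 1 ∧ PowerSeries.coeff (R := KK) 1 w = 1 ∧
    PowerSeries.C (R := KK) (ρ * (ρ + 1))⁻¹ * bpow (ρ + 1) (w - 1)
        - PowerSeries.C (R := KK) ρ⁻¹ * w + PowerSeries.C (R := KK) (ρ + 1)⁻¹
      = PowerSeries.C (R := KK) (2 : KK)⁻¹ * PowerSeries.X ^ 2

/-- `Cco a w n` is the coefficient `C_n(r,a)`: the coefficient of `u^{n+1}` in
`(w^{a+1} - 1)/(a+1)`. -/
def Cco (a : KK) (w : PowerSeries KK) (n : ℕ) : KK :=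
  (a + 1)⁻¹ * PowerSeries.coeff (R := KK) (n + 1) (bpow (a + 1) (w - 1) - 1)

/-- `fT a w` is the series `f_a(T) = Σ_{k≥0} (2k+1)!! C_{2k}(r,a) (-T)^k`. -/
def fT (a : KK) (w : PowerSeries KK) : PowerSeries KK :=
  PowerSeries.mk fun k =>
    (Nat.doubleFactorial (2 * k + 1) : KK) * Cco a w (2 * k) * (-1) ^ k

/-- The formal derivative `d/dT` of a power series. -/
def psDeriv (f : PowerSeries KK) : PowerSeries KK :=
  PowerSeries.mk fun n => ((n : KK) + 1) * PowerSeries.coeff (R := KK) (n + 1) f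

/-! ### Auxiliary lemmas -/

open PowerSeries Finset

lemma KK_inj : Function.Injective (algebraMap (MvPolynomial (Fin 2) ℚ) KK) :=
  IsFractionRing.injective _ _

lemma KK_map_ne_zero {p : MvPolynomial (Fin 2) ℚ} (hp : p ≠ 0) :
    algebraMap (MvPolynomial (Fin 2) ℚ) KK p ≠ 0 := by
  intro h
  exact hp (KK_inj (by simpa using h))

lemma X_add_ne_zero (i : Fin 2) (c : ℚ) :
    (MvPolynomial.X i + MvPolynomial.C c : MvPolynomial (Fin 2) ℚ) ≠ 0 := by
  intro h
  have := congrArg (MvPolynomial.coeff (Finsupp.single i 1)) h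
  simp only [MvPolynomial.coeff_add, MvPolynomial.coeff_X, MvPolynomial.coeff_zero,
    MvPolynomial.coeff_C] at this
  rw [if_neg (Finsupp.single_ne_zero.mpr one_ne_zero).symm] at this
  simp at this

lemma Rv_ne_zero : Rv ≠ 0 := KK_map_ne_zero (MvPolynomial.X_ne_zero 0)

lemma Rv_add_one_ne_zero : Rv + 1 ≠ 0 := by
  have h : Rv + 1 = algebraMap (MvPolynomial (Fin 2) ℚ) KK
      (MvPolynomial.X 0 + MvPolynomial.C 1) := by
    rw [map_add, Rv, map_one, map_one]
  rw [h]
  exact KK_map_ne_zero (X_add_ne_zero 0 1)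

lemma Jv_add_one_ne_zero : Jv + 1 ≠ 0 := by
  have h : Jv + 1 = algebraMap (MvPolynomial (Fin 2) ℚ) KK
      (MvPolynomial.X 1 + MvPolynomial.C 1) := by
    rw [map_add, Jv, map_one, map_one]
  rw [h]
  exact KK_map_ne_zero (X_add_ne_zero 1 1)

lemma Jv_add_two_ne_zero : Jv + 1 + 1 ≠ 0 := by
  have h : Jv + 1 + 1 = algebraMap (MvPolynomial (Fin 2) ℚ) KK
      (MvPolynomial.X 1 + MvPolynomial.C 2) := by
    rw [show (MvPolynomial.C (2:ℚ) : MvPolynomial (Fin 2) ℚ)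
        = MvPolynomial.C 1 + MvPolynomial.C 1 by rw [← map_add]; norm_num]
    simp only [map_add, map_one, Jv]
    ring
  rw [h]
  exact KK_map_ne_zero (X_add_ne_zero 1 2)

lemma two_ne_zero_KK : (2 : KK) ≠ 0 := two_ne_zero

/-! ### gbinom lemmas -/

lemma descPochhammer_smeval_prod (a : KK) (k : ℕ) :
    (descPochhammer ℤ k).smeval a = ∏ i ∈ Finset.range k, (a - (i : KK)) := by
  induction k with
  | zero => simp
  | succ n ih =>
      rw [descPochhammer_succ_right, Polynomial.smeval_mul, ih, Finset.prod_range_succ]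
      simp [Polynomial.smeval_sub, Polynomial.smeval_natCast]

lemma gbinom_eq_choose (a : KK) (k : ℕ) : gbinom a k = Ring.choose a k := by
  have h := Ring.descPochhammer_eq_factorial_smul_choose a k
  rw [descPochhammer_smeval_prod] at h
  have hk : (k.factorial : KK) ≠ 0 := Nat.cast_ne_zero.mpr k.factorial_ne_zero
  rw [gbinom, h, nsmul_eq_mul]
  field_simp

lemma gbinom_add (a b : KK) (k : ℕ) :
    gbinom (a + b) k = ∑ ij ∈ Finset.HasAntidiagonal.antidiagonal k, gbinom a ij.1 * gbinom b ij.2 := by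
  simp only [gbinom_eq_choose]
  exact Ring.add_choose_eq k (Commute.all a b)

lemma gbinom_zero (a : KK) : gbinom a 0 = 1 := by simp [gbinom]

lemma gbinom_one (a : KK) : gbinom a 1 = a := by simp [gbinom]

lemma gbinom_one_eq_zero {k : ℕ} (hk : 2 ≤ k) : gbinom (1 : KK) k = 0 := by
  rw [gbinom, Finset.prod_eq_zero (i := 1) (Finset.mem_range.mpr (by omega))]
  · simp
  · simp

lemma gbinom_succ_mul (a : KK) (k : ℕ) :
    ((k : KK) + 1) * gbinom a (k + 1) = a * gbinom (a - 1) k := by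
  have hfac : ((k + 1).factorial : KK) = ((k : KK) + 1) * (k.factorial : KK) := by
    rw [Nat.factorial_succ]; push_cast; ring
  have hprod : ∏ i ∈ Finset.range (k + 1), (a - (i : KK))
      = (∏ i ∈ Finset.range k, (a - 1 - (i : KK))) * a := by
    rw [Finset.prod_range_succ']
    congr 1
    · exact Finset.prod_congr rfl fun i _ => by push_cast; ring
    · simp
  have hk1 : ((k : KK) + 1) ≠ 0 := by
    have h : ((k + 1 : ℕ) : KK) ≠ 0 := Nat.cast_ne_zero.mpr k.succ_ne_zero
    push_cast at h; exact h
  have hfk : (k.factorial : KK) ≠ 0 := Nat.cast_ne_zero.mpr k.factorial_ne_zero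
  rw [gbinom, gbinom, hprod, hfac]
  field_simp

/-! ### bpow lemmas -/

lemma coeff_v_pow_eq_zero {v : PowerSeries KK} (hv : PowerSeries.constantCoeff (R := KK) v = 0)
    {n k : ℕ} (h : n < k) : PowerSeries.coeff (R := KK) n (v ^ k) = 0 := by
  have hd : (PowerSeries.X : PowerSeries KK) ^ k ∣ v ^ k :=
    pow_dvd_pow_of_dvd (PowerSeries.X_dvd_iff.mpr hv) k
  exact (PowerSeries.X_pow_dvd_iff.mp hd) n h

lemma coeff_bpow {v : PowerSeries KK} (hv : PowerSeries.constantCoeff (R := KK) v = 0)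
    (a : KK) (n N : ℕ) (hN : n + 1 ≤ N) :
    PowerSeries.coeff (R := KK) n (bpow a v)
      = ∑ k ∈ Finset.range N, gbinom a k * PowerSeries.coeff (R := KK) n (v ^ k) := by
  rw [bpow, PowerSeries.coeff_mk]
  refine Finset.sum_subset (Finset.range_subset_range.mpr hN) ?_
  intro k hk hk'
  rw [Finset.mem_range] at hk hk'
  rw [coeff_v_pow_eq_zero hv (by omega), mul_zero]

lemma bpow_mul {v : PowerSeries KK} (hv : PowerSeries.constantCoeff (R := KK) v = 0) (a b : KK) :
    bpow a v * bpow b v = bpow (a + b) v := by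
  ext n
  have hL : PowerSeries.coeff (R := KK) n (bpow a v * bpow b v)
      = ∑ i ∈ Finset.range (n + 1), ∑ l ∈ Finset.range (n + 1),
          gbinom a i * gbinom b l * PowerSeries.coeff (R := KK) n (v ^ (i + l)) := by
    rw [PowerSeries.coeff_mul]
    have h1 : ∀ p ∈ Finset.HasAntidiagonal.antidiagonal n,
        PowerSeries.coeff (R := KK) p.1 (bpow a v) * PowerSeries.coeff (R := KK) p.2 (bpow b v)
        = ∑ i ∈ Finset.range (n + 1), ∑ l ∈ Finset.range (n + 1),
            gbinom a i * gbinom b l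
              * (PowerSeries.coeff (R := KK) p.1 (v ^ i) * PowerSeries.coeff (R := KK) p.2 (v ^ l)) := by
      intro p hp
      rw [coeff_bpow hv a p.1 (n + 1) (by have := Finset.HasAntidiagonal.antidiagonal.fst_le hp; omega),
        coeff_bpow hv b p.2 (n + 1) (by have := Finset.HasAntidiagonal.antidiagonal.snd_le hp; omega),
        Finset.sum_mul_sum]
      exact Finset.sum_congr rfl fun i _ => Finset.sum_congr rfl fun l _ => by ring
    rw [Finset.sum_congr rfl h1, Finset.sum_comm]
    refine Finset.sum_congr rfl fun i _ => ?_
    rw [Finset.sum_comm]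
    refine Finset.sum_congr rfl fun l _ => ?_
    rw [← Finset.mul_sum, pow_add, PowerSeries.coeff_mul]
  have hR : PowerSeries.coeff (R := KK) n (bpow (a + b) v)
      = ∑ i ∈ Finset.range (n + 1), ∑ l ∈ Finset.range (n + 1),
          gbinom a i * gbinom b l * PowerSeries.coeff (R := KK) n (v ^ (i + l)) := by
    rw [coeff_bpow hv (a + b) n (n + 1) le_rfl]
    have h3 : ∀ k ∈ Finset.range (n + 1),
        gbinom (a + b) k * PowerSeries.coeff (R := KK) n (v ^ k)
        = ∑ ij ∈ Finset.range (n + 1) ×ˢ Finset.range (n + 1),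
            (if ij.1 + ij.2 = k then
              gbinom a ij.1 * gbinom b ij.2 * PowerSeries.coeff (R := KK) n (v ^ (ij.1 + ij.2))
            else 0) := by
      intro k hk
      rw [Finset.mem_range] at hk
      have hset : Finset.HasAntidiagonal.antidiagonal k
          = (Finset.range (n + 1) ×ˢ Finset.range (n + 1)).filter
              (fun ij => ij.1 + ij.2 = k) := by
        ext ij
        simp only [Finset.HasAntidiagonal.mem_antidiagonal, Finset.mem_filter, Finset.mem_product,
          Finset.mem_range]
        omega
      rw [gbinom_add, Finset.sum_mul,
        show (∑ ij ∈ Finset.HasAntidiagonal.antidiagonal k, gbinom a ij.1 * gbinom b ij.2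
            * PowerSeries.coeff (R := KK) n (v ^ k))
          = ∑ ij ∈ Finset.HasAntidiagonal.antidiagonal k, gbinom a ij.1 * gbinom b ij.2
            * PowerSeries.coeff (R := KK) n (v ^ (ij.1 + ij.2)) from
          Finset.sum_congr rfl fun ij hij => by rw [Finset.HasAntidiagonal.mem_antidiagonal.mp hij],
        hset, Finset.sum_filter]
    rw [Finset.sum_congr rfl h3, Finset.sum_comm]
    have h5 : ∀ ij ∈ Finset.range (n + 1) ×ˢ Finset.range (n + 1),
        (∑ k ∈ Finset.range (n + 1), if ij.1 + ij.2 = k then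
            gbinom a ij.1 * gbinom b ij.2 * PowerSeries.coeff (R := KK) n (v ^ (ij.1 + ij.2))
          else 0)
        = gbinom a ij.1 * gbinom b ij.2 * PowerSeries.coeff (R := KK) n (v ^ (ij.1 + ij.2)) := by
      intro ij _
      rw [Finset.sum_ite_eq]
      by_cases h : ij.1 + ij.2 ∈ Finset.range (n + 1)
      · rw [if_pos h]
      · rw [if_neg h]
        rw [Finset.mem_range, not_lt] at h
        rw [coeff_v_pow_eq_zero hv (by omega), mul_zero]
    rw [Finset.sum_congr rfl h5, Finset.sum_product]
  rw [hL, hR]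

lemma bpow_one {v : PowerSeries KK} (hv : PowerSeries.constantCoeff (R := KK) v = 0) :
    bpow 1 v = 1 + v := by
  ext n
  rw [coeff_bpow hv 1 n (n + 2) (by omega)]
  rw [Finset.sum_range_succ' _ (n + 1), Finset.sum_range_succ' _ n]
  have hz : (∑ k ∈ Finset.range n,
      gbinom 1 (k + 1 + 1) * PowerSeries.coeff (R := KK) n (v ^ (k + 1 + 1))) = 0 :=
    Finset.sum_eq_zero fun k _ => by rw [gbinom_one_eq_zero (by omega), zero_mul]
  rw [hz, gbinom_zero, gbinom_one, zero_add, one_mul, one_mul, pow_one, pow_zero, map_add]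
  ring

/-- Truncation polynomials of the binomial series. -/
def Tn (v : PowerSeries KK) (N : ℕ) (a : KK) : PowerSeries KK :=
  ∑ k ∈ Finset.range N, PowerSeries.C (R := KK) (gbinom a k) * v ^ k

lemma X_pow_dvd_bpow_sub_Tn {v : PowerSeries KK} (hv : PowerSeries.constantCoeff (R := KK) v = 0)
    (a : KK) (N : ℕ) : (PowerSeries.X : PowerSeries KK) ^ N ∣ bpow a v - Tn v N a := by
  rw [PowerSeries.X_pow_dvd_iff]
  intro m hm
  simp only [map_sub, Tn, map_sum, PowerSeries.coeff_C_mul]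
  rw [coeff_bpow hv a m N (by omega), sub_self]

lemma derivative_C_mul (c : KK) (f : PowerSeries KK) :
    PowerSeries.derivative KK (PowerSeries.C (R := KK) c * f)
      = PowerSeries.C (R := KK) c * PowerSeries.derivative KK f := by
  rw [Derivation.leibniz, PowerSeries.derivative_C, smul_eq_mul, smul_eq_mul, mul_zero, add_zero]

lemma derivative_Tn (v : PowerSeries KK) (N : ℕ) (a : KK) :
    PowerSeries.derivative KK (Tn v (N + 1) a)
      = PowerSeries.C (R := KK) a * Tn v N (a - 1) * PowerSeries.derivative KK v := by
  rw [Tn, map_sum, Finset.sum_range_succ']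
  have h0 : PowerSeries.derivative KK (PowerSeries.C (R := KK) (gbinom a 0) * v ^ 0) = 0 := by
    rw [pow_zero, mul_one, PowerSeries.derivative_C]
  rw [h0, add_zero]
  have h1 : ∀ k, PowerSeries.derivative KK (PowerSeries.C (R := KK) (gbinom a (k + 1)) * v ^ (k + 1))
      = PowerSeries.C (R := KK) a * (PowerSeries.C (R := KK) (gbinom (a - 1) k) * v ^ k)
          * PowerSeries.derivative KK v := by
    intro k
    rw [derivative_C_mul, Derivation.leibniz_pow, Nat.add_sub_cancel]
    simp only [smul_eq_mul, nsmul_eq_mul]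
    have hcast : ((k + 1 : ℕ) : PowerSeries KK) = PowerSeries.C (R := KK) ((k : KK) + 1) := by
      rw [← map_natCast (PowerSeries.C (R := KK)) (k + 1)]
      push_cast
      ring_nf
    rw [hcast]
    rw [show PowerSeries.C (R := KK) (gbinom a (k + 1)) * (PowerSeries.C (R := KK) ((k : KK) + 1)
          * (v ^ k * PowerSeries.derivative KK v))
        = (PowerSeries.C (R := KK) ((k : KK) + 1) * PowerSeries.C (R := KK) (gbinom a (k + 1)))
          * v ^ k * PowerSeries.derivative KK v by ring]
    rw [← map_mul, gbinom_succ_mul, map_mul]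
    ring
  rw [Finset.sum_congr rfl fun k _ => h1 k, Tn, Finset.mul_sum, Finset.sum_mul]

lemma eq_zero_of_forall_X_pow_dvd (f : PowerSeries KK)
    (h : ∀ N, (PowerSeries.X : PowerSeries KK) ^ N ∣ f) : f = 0 := by
  ext m
  rw [map_zero]
  exact (PowerSeries.X_pow_dvd_iff.mp (h (m + 1))) m (by omega)

lemma bpow_deriv {v : PowerSeries KK} (hv : PowerSeries.constantCoeff (R := KK) v = 0) (a : KK) :
    PowerSeries.derivative KK (bpow a v)
      = PowerSeries.C (R := KK) a * bpow (a - 1) v * PowerSeries.derivative KK v := by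
  rw [← sub_eq_zero]
  apply eq_zero_of_forall_X_pow_dvd
  intro N
  have h2 := X_pow_dvd_bpow_sub_Tn hv (a - 1) N
  have hd1 : (PowerSeries.X : PowerSeries KK) ^ N
      ∣ PowerSeries.derivative KK (bpow a v - Tn v (N + 1) a) := by
    obtain ⟨g, hg⟩ := X_pow_dvd_bpow_sub_Tn hv a (N + 1)
    rw [hg]
    refine ⟨PowerSeries.X * PowerSeries.derivative KK g + ((N + 1 : ℕ) : PowerSeries KK) * g, ?_⟩
    rw [Derivation.leibniz, Derivation.leibniz_pow, PowerSeries.derivative_X,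
      Nat.add_sub_cancel]
    simp only [smul_eq_mul, nsmul_eq_mul]
    ring
  have heq : PowerSeries.derivative KK (bpow a v)
        - PowerSeries.C (R := KK) a * bpow (a - 1) v * PowerSeries.derivative KK v
      = PowerSeries.derivative KK (bpow a v - Tn v (N + 1) a)
        - PowerSeries.C (R := KK) a * ((bpow (a - 1) v - Tn v N (a - 1))
            * PowerSeries.derivative KK v) := by
    rw [map_sub, derivative_Tn]
    ring
  rw [heq]
  exact dvd_sub hd1 ((h2.mul_right _).mul_left _)

/-! ### The main theorem -/

set_option maxHeartbeats 2000000 in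
theorem stmt3 (w : PowerSeries KK) (hw : isW Rv w) :
    fT (Jv + 1) w
      = fT Jv w + PowerSeries.C (R := KK) ((Rv - 1) / 2 - Jv) * PowerSeries.X * fT Jv w
        + PowerSeries.C (R := KK) (Rv + 1) * PowerSeries.X ^ 2 * psDeriv (fT Jv w) := by
  obtain ⟨hw0, -, E0⟩ := hw
  set v : PowerSeries KK := w - 1 with hv_def
  have hv : PowerSeries.constantCoeff (R := KK) v = 0 := by
    rw [hv_def, map_sub, map_one, ← PowerSeries.coeff_zero_eq_constantCoeff, hw0, sub_self]
  set Dw : PowerSeries KK := PowerSeries.derivative KK w with hDw_def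
  have hDv : PowerSeries.derivative KK v = Dw := by
    rw [hv_def, map_sub, Derivation.map_one_eq_zero, sub_zero]
  have hwv : bpow 1 v = w := by
    rw [bpow_one hv, hv_def]; ring
  -- scalar constants
  have hB : PowerSeries.C (R := KK) Rv * PowerSeries.C (R := KK) Rv⁻¹ = 1 := by
    rw [← map_mul, mul_inv_cancel₀ Rv_ne_zero, map_one]
  -- the derivative of the defining equation: (w^r - 1) w' = r u
  have E2 : bpow Rv v * Dw = Dw + PowerSeries.C (R := KK) Rv * PowerSeries.X := by
    have hD := congrArg (PowerSeries.derivative KK) E0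
    rw [map_add, map_sub, derivative_C_mul, derivative_C_mul, PowerSeries.derivative_C,
      derivative_C_mul, bpow_deriv hv, add_sub_cancel_right, hDv,
      Derivation.leibniz_pow, PowerSeries.derivative_X, add_zero] at hD
    simp only [smul_eq_mul, nsmul_eq_mul, mul_one, show (2:ℕ) - 1 = 1 from rfl, pow_one,
      Nat.cast_ofNat] at hD
    rw [← hDw_def] at hD
    have hc1 : PowerSeries.C (R := KK) ((Rv * (Rv + 1))⁻¹) * PowerSeries.C (R := KK) (Rv + 1)
        = PowerSeries.C (R := KK) Rv⁻¹ := by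
      rw [← map_mul]
      congr 1
      rw [mul_inv, mul_assoc, inv_mul_cancel₀ Rv_add_one_ne_zero, mul_one]
    have htwo : PowerSeries.C (R := KK) ((2 : KK)⁻¹) * (2 : PowerSeries KK) = 1 := by
      rw [show (2 : PowerSeries KK) = PowerSeries.C (R := KK) (2 : KK) from
          (map_ofNat (PowerSeries.C (R := KK)) 2).symm,
        ← map_mul, inv_mul_cancel₀ two_ne_zero_KK, map_one]
    linear_combination PowerSeries.C (R := KK) Rv * hD
      - (PowerSeries.C (R := KK) Rv * (bpow Rv v * Dw)) * hc1
      - (bpow Rv v * Dw - Dw) * hB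
      + (PowerSeries.C (R := KK) Rv * PowerSeries.X) * htwo
  -- the defining equation multiplied by (r+1)
  have E1 : PowerSeries.C (R := KK) (Rv + 1) * (PowerSeries.C (R := KK) (2 : KK)⁻¹ * PowerSeries.X ^ 2)
      = PowerSeries.C (R := KK) Rv⁻¹ * bpow (Rv + 1) v
        - (1 + PowerSeries.C (R := KK) Rv⁻¹) * w + 1 := by
    have hc1 : PowerSeries.C (R := KK) (Rv + 1) * PowerSeries.C (R := KK) ((Rv * (Rv + 1))⁻¹)
        = PowerSeries.C (R := KK) Rv⁻¹ := by
      rw [← map_mul]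
      congr 1
      rw [mul_inv, mul_comm Rv⁻¹ (Rv+1)⁻¹, ← mul_assoc, mul_inv_cancel₀ Rv_add_one_ne_zero,
        one_mul]
    have hc2 : PowerSeries.C (R := KK) (Rv + 1) * PowerSeries.C (R := KK) Rv⁻¹
        = 1 + PowerSeries.C (R := KK) Rv⁻¹ := by
      rw [← map_mul, add_mul, one_mul, mul_inv_cancel₀ Rv_ne_zero, map_add, map_one]
    have hc3 : PowerSeries.C (R := KK) (Rv + 1) * PowerSeries.C (R := KK) ((Rv + 1)⁻¹) = 1 := by
      rw [← map_mul, mul_inv_cancel₀ Rv_add_one_ne_zero, map_one]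
    calc PowerSeries.C (R := KK) (Rv + 1) * (PowerSeries.C (R := KK) (2 : KK)⁻¹ * PowerSeries.X ^ 2)
        = PowerSeries.C (R := KK) (Rv + 1) * (PowerSeries.C (R := KK) (Rv * (Rv + 1))⁻¹ * bpow (Rv + 1) v
            - PowerSeries.C (R := KK) Rv⁻¹ * w + PowerSeries.C (R := KK) (Rv + 1)⁻¹) := by rw [E0]
      _ = (PowerSeries.C (R := KK) (Rv + 1) * PowerSeries.C (R := KK) ((Rv * (Rv + 1))⁻¹)) * bpow (Rv + 1) v
            - (PowerSeries.C (R := KK) (Rv + 1) * PowerSeries.C (R := KK) Rv⁻¹) * w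
            + PowerSeries.C (R := KK) (Rv + 1) * PowerSeries.C (R := KK) ((Rv + 1)⁻¹) := by ring
      _ = _ := by rw [hc1, hc2, hc3]
  -- multiplicativity instances
  have M1 : bpow (Rv + 1) v * bpow Jv v = bpow Rv v * bpow (Jv + 1) v := by
    rw [bpow_mul hv, bpow_mul hv, show Rv + 1 + Jv = Rv + (Jv + 1) by ring]
  have M2 : w * bpow Jv v = bpow (Jv + 1) v := by
    rw [← hwv, bpow_mul hv, show (1 : KK) + Jv = Jv + 1 by ring]
  -- the key power-series identity
  have I : bpow (Jv + 1) v * Dw - bpow Jv v * Dw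
      + PowerSeries.C (R := KK) (Rv + 1) * (PowerSeries.C (R := KK) (2 : KK)⁻¹
          * (PowerSeries.X ^ 2 * (bpow Jv v * Dw)))
      - PowerSeries.X * (bpow (Jv + 1) v - 1) = PowerSeries.X := by
    linear_combination (bpow Jv v * Dw) * E1 + (PowerSeries.C (R := KK) Rv⁻¹ * Dw) * M1
      + (PowerSeries.C (R := KK) Rv⁻¹ * bpow (Jv + 1) v) * E2
      + (PowerSeries.X * bpow (Jv + 1) v) * hB
      - ((1 + PowerSeries.C (R := KK) Rv⁻¹) * Dw) * M2
  -- coefficient extraction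
  have coeff_W_Dw : ∀ (a : KK), a + 1 ≠ 0 → ∀ n : ℕ,
      PowerSeries.coeff (R := KK) n (bpow a v * Dw) = ((n : KK) + 1) * Cco a w n := by
    intro a ha n
    have hder := bpow_deriv hv (a + 1)
    rw [add_sub_cancel_right, hDv] at hder
    have hc := congrArg (PowerSeries.coeff (R := KK) n) hder
    rw [PowerSeries.coeff_derivative, mul_assoc, PowerSeries.coeff_C_mul] at hc
    rw [Cco, map_sub, PowerSeries.coeff_one, if_neg (Nat.succ_ne_zero n), sub_zero, ← hv_def]
    rw [show PowerSeries.coeff (R := KK) n (bpow a v * Dw)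
        = (a + 1)⁻¹ * ((a + 1) * PowerSeries.coeff (R := KK) n (bpow a v * Dw)) by
      rw [← mul_assoc, inv_mul_cancel₀ ha, one_mul]]
    rw [← hc]
    ring
  have hCcoJ : ∀ n : ℕ, PowerSeries.coeff (R := KK) (n + 1) (bpow (Jv + 1) v - 1)
      = (Jv + 1) * Cco Jv w n := by
    intro n
    rw [Cco, ← hv_def, ← mul_assoc, mul_inv_cancel₀ Jv_add_one_ne_zero, one_mul]
  -- the k = 0 identity
  have key0 : Cco (Jv + 1) w 0 = Cco Jv w 0 := by
    have hc := congrArg (PowerSeries.coeff (R := KK) 0) I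
    rw [map_sub, map_add, map_sub, coeff_W_Dw (Jv + 1) Jv_add_two_ne_zero 0,
      coeff_W_Dw Jv Jv_add_one_ne_zero 0] at hc
    rw [PowerSeries.coeff_C_mul, PowerSeries.coeff_C_mul,
      PowerSeries.coeff_X_pow_mul' (bpow Jv v * Dw) 2 0, if_neg (by omega)] at hc
    rw [show (PowerSeries.X * (bpow (Jv + 1) v - 1))
        = PowerSeries.X ^ 1 * (bpow (Jv + 1) v - 1) by ring,
      PowerSeries.coeff_X_pow_mul' (bpow (Jv + 1) v - 1) 1 0, if_neg (by omega)] at hc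
    rw [PowerSeries.coeff_X, if_neg (by omega)] at hc
    push_cast at hc
    linear_combination hc
  -- the k = m+1 identity
  have key : ∀ m : ℕ,
      (2 * (m : KK) + 3) * Cco (Jv + 1) w (2 * m + 2)
        - (2 * (m : KK) + 3) * Cco Jv w (2 * m + 2)
        + (Rv + 1) * ((2 : KK)⁻¹ * ((2 * (m : KK) + 1) * Cco Jv w (2 * m)))
        - (Jv + 1) * Cco Jv w (2 * m) = 0 := by
    intro m
    have hc := congrArg (PowerSeries.coeff (R := KK) (2 * m + 2)) I
    rw [map_sub, map_add, map_sub, coeff_W_Dw (Jv + 1) Jv_add_two_ne_zero (2 * m + 2),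
      coeff_W_Dw Jv Jv_add_one_ne_zero (2 * m + 2)] at hc
    rw [PowerSeries.coeff_C_mul, PowerSeries.coeff_C_mul,
      show 2 * m + 2 = 2 * m + 2 from rfl,
      PowerSeries.coeff_X_pow_mul (bpow Jv v * Dw) 2 (2 * m),
      coeff_W_Dw Jv Jv_add_one_ne_zero (2 * m)] at hc
    rw [show (PowerSeries.X * (bpow (Jv + 1) v - 1))
        = PowerSeries.X ^ 1 * (bpow (Jv + 1) v - 1) by ring,
      show 2 * m + 2 = (2 * m + 1) + 1 by ring,
      PowerSeries.coeff_X_pow_mul (bpow (Jv + 1) v - 1) 1 (2 * m + 1),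
      hCcoJ (2 * m)] at hc
    rw [PowerSeries.coeff_X, if_neg (by omega)] at hc
    push_cast at hc
    linear_combination hc
  -- assemble
  have hfT : ∀ (a : KK) (k : ℕ), PowerSeries.coeff (R := KK) k (fT a w)
      = (Nat.doubleFactorial (2 * k + 1) : KK) * Cco a w (2 * k) * (-1) ^ k := by
    intro a k
    rw [fT, PowerSeries.coeff_mk]
  ext k
  rw [map_add, map_add, hfT, hfT,
    mul_assoc (PowerSeries.C (R := KK) ((Rv - 1) / 2 - Jv)), PowerSeries.coeff_C_mul,
    mul_assoc (PowerSeries.C (R := KK) (Rv + 1)), PowerSeries.coeff_C_mul]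
  cases k with
  | zero =>
      rw [show PowerSeries.coeff (R := KK) 0 (PowerSeries.X * fT Jv w) = 0 by
          rw [PowerSeries.coeff_zero_eq_constantCoeff, map_mul, PowerSeries.constantCoeff_X,
            zero_mul],
        show PowerSeries.coeff (R := KK) 0 (PowerSeries.X ^ 2 * psDeriv (fT Jv w)) = 0 by
          rw [PowerSeries.coeff_X_pow_mul' _ 2 0, if_neg (by omega)]]
      simp only [Nat.mul_zero]
      rw [key0]
      ring
  | succ m =>
      rw [PowerSeries.coeff_succ_X_mul, hfT]
      have hpsd : PowerSeries.coeff (R := KK) (m + 1) (PowerSeries.X ^ 2 * psDeriv (fT Jv w))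
          = (m : KK) * ((Nat.doubleFactorial (2 * m + 1) : KK)
              * Cco Jv w (2 * m) * (-1) ^ m) := by
        cases m with
        | zero =>
            rw [PowerSeries.coeff_X_pow_mul' _ 2 1, if_neg (by omega)]
            push_cast
            ring
        | succ l =>
            rw [show l + 1 + 1 = l + 2 by ring, PowerSeries.coeff_X_pow_mul _ 2 l,
              psDeriv, PowerSeries.coeff_mk, hfT]
            push_cast
            ring
      rw [hpsd]
      have hDF : ((2 * (m + 1) + 1).doubleFactorial : KK)
          = (2 * (m : KK) + 3) * ((2 * m + 1).doubleFactorial : KK) := by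
        rw [show 2 * (m + 1) + 1 = (2 * m + 1) + 2 by ring, Nat.doubleFactorial_add_two]
        push_cast
        ring
      rw [hDF, show 2 * (m + 1) = 2 * m + 2 by ring]
      have h2 : (2 : KK) * (2 : KK)⁻¹ = 1 := mul_inv_cancel₀ two_ne_zero_KK
      linear_combination (-(((2 * m + 1).doubleFactorial : KK) * (-1) ^ m)) * key m
        + (((2 * m + 1).doubleFactorial : KK) * Cco Jv w (2 * m) * (-1) ^ m
            * (1 + (Rv + 1) * (m : KK))) * h2

end
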